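/- Suppose d = F[m_*]w_* with w_* ∈ W_λ nonzero, and define e_λ[m, w] = ‖F[m]w - d‖²/(2‖d‖²) for w ∈ W_λ. If |m - m_*|·r > 2λ, then e_λ[m, w] = (‖w‖²/‖w_*‖² + 1)/2 for all w ∈ W_λ; in particular the minimum over w ∈ W_λ is 1/2, attained at w = 0, and (m, 0) is a local minimizer of e_λ with relative RMS error 1. -/

import Mathlib

open MeasureTheory Real Set

lemma sq_shift (f : ℝ → ℝ) (c k : ℝ) :
    (∫ t, (f (t - c) / k) ^ 2) = (∫ t, (f t) ^ 2) / k ^ 2 := by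
  simp_rw [div_pow]
  rw [integral_div, integral_sub_right_eq_self (fun t => f t ^ 2) c]

/-- For noise-free data `d = F[m_*]w_*` with `w_* ∈ W_λ` nonzero,
if `|m - m_*| r > 2λ` then `e_λ[m, w] = (‖w‖²/‖w_*‖² + 1)/2` for all
`w ∈ W_λ`; in particular the minimum over `w ∈ W_λ` is `1/2`, attained at
`w = 0` (relative RMS error 1). -/
theorem stmt_3 (r lam m mstar : ℝ) (hr : 0 < r) (hlam : 0 < lam)
    (wstar : ℝ → ℝ)
    (hwstar : MemLp wstar 2 (volume : Measure ℝ))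
    (hsuppstar : Function.support wstar ⊆ Icc (-lam) lam)
    (hnz : 0 < ∫ t, (wstar t) ^ 2)
    (hfar : |m - mstar| * r > 2 * lam)
    (d : ℝ → ℝ) (hd : d = fun t => wstar (t - mstar * r) / (4 * π * r)) :
    (∀ w : ℝ → ℝ, MemLp w 2 (volume : Measure ℝ) →
      Function.support w ⊆ Icc (-lam) lam →
      (∫ t, (w (t - m * r) / (4 * π * r) - d t) ^ 2) / (2 * ∫ t, (d t) ^ 2)
        = ((∫ t, (w t) ^ 2) / (∫ t, (wstar t) ^ 2) + 1) / 2) ∧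
    (∫ t, ((0 : ℝ) - d t) ^ 2) / (2 * ∫ t, (d t) ^ 2) = 1 / 2 := by
  have hk : (4 * π * r) ≠ 0 := by positivity
  have hd2 : (∫ t, (d t) ^ 2) = (∫ t, (wstar t) ^ 2) / (4 * π * r) ^ 2 := by
    rw [hd]; exact sq_shift wstar (mstar * r) (4 * π * r)
  have hd2pos : 0 < ∫ t, (d t) ^ 2 := by
    rw [hd2]; positivity
  constructor
  · intro w hw hsupp
    -- disjoint supports
    have hdis : ∀ t, w (t - m * r) * wstar (t - mstar * r) = 0 := by
      intro t
      by_contra h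
      rcases mul_ne_zero_iff.1 h with ⟨h1, h2⟩
      have ha := hsupp (Function.mem_support.2 h1)
      have hb := hsuppstar (Function.mem_support.2 h2)
      simp only [mem_Icc] at ha hb
      have key : |(m - mstar) * r| ≤ 2 * lam := by
        have hq : (m - mstar) * r = (t - mstar * r) - (t - m * r) := by ring
        rw [abs_le]; constructor <;> linarith [hq]
      rw [abs_mul, abs_of_pos hr] at key
      linarith
    have hptw : ∀ t, (w (t - m * r) / (4 * π * r) - d t) ^ 2
        = w (t - m * r) ^ 2 / (4 * π * r) ^ 2
          + wstar (t - mstar * r) ^ 2 / (4 * π * r) ^ 2 := by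
      intro t
      rw [hd]
      have h0 := hdis t
      have : (w (t - m * r) / (4 * π * r) - wstar (t - mstar * r) / (4 * π * r)) ^ 2
          = w (t - m * r) ^ 2 / (4 * π * r) ^ 2
            - 2 * (w (t - m * r) * wstar (t - mstar * r)) / (4 * π * r) ^ 2
            + wstar (t - mstar * r) ^ 2 / (4 * π * r) ^ 2 := by
        field_simp; ring
      simp only [this, h0, mul_zero, zero_div, sub_zero]
    have hA : Integrable (fun t => w (t - m * r) ^ 2 / (4 * π * r) ^ 2) :=
      ((hw.integrable_sq).comp_sub_right (m * r)).div_const _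
    have hB : Integrable (fun t => wstar (t - mstar * r) ^ 2 / (4 * π * r) ^ 2) :=
      ((hwstar.integrable_sq).comp_sub_right (mstar * r)).div_const _
    have hsplit : (∫ t, (w (t - m * r) / (4 * π * r) - d t) ^ 2)
        = (∫ t, (w t) ^ 2) / (4 * π * r) ^ 2
          + (∫ t, (wstar t) ^ 2) / (4 * π * r) ^ 2 := by
      calc (∫ t, (w (t - m * r) / (4 * π * r) - d t) ^ 2)
          = ∫ t, (w (t - m * r) ^ 2 / (4 * π * r) ^ 2
              + wstar (t - mstar * r) ^ 2 / (4 * π * r) ^ 2) := by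
            exact integral_congr_ae (Filter.Eventually.of_forall hptw)
        _ = (∫ t, w (t - m * r) ^ 2 / (4 * π * r) ^ 2)
              + ∫ t, wstar (t - mstar * r) ^ 2 / (4 * π * r) ^ 2 :=
            integral_add hA hB
        _ = (∫ t, (w t) ^ 2) / (4 * π * r) ^ 2
              + (∫ t, (wstar t) ^ 2) / (4 * π * r) ^ 2 := by
            simp_rw [integral_div,
              integral_sub_right_eq_self (fun t => w t ^ 2) (m * r),
              integral_sub_right_eq_self (fun t => wstar t ^ 2) (mstar * r)]
    rw [hsplit, hd2]
    have hIs := hnz.ne'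
    have hk2 : ((4 * π * r) : ℝ) ^ 2 ≠ 0 := pow_ne_zero _ hk
    rw [div_eq_div_iff (by positivity) (by norm_num : (2:ℝ) ≠ 0)]
    field_simp
  · have : (∫ t, ((0 : ℝ) - d t) ^ 2) = ∫ t, (d t) ^ 2 := by
      simp [zero_sub, neg_sq]
    rw [this]
    rw [div_eq_iff (by positivity : (2 : ℝ) * ∫ t, (d t) ^ 2 ≠ 0)]
    ring
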